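/- Let R be a commutative ring and S a subring of R. Let ι be a finite type, and let G : ι → ι → ℤ → R satisfy: G b b' n = 0 whenever n > 0; G b b' 0 = 1 if b = b' and G b b' 0 = 0 if b ≠ b'; and G b b' n ∈ S whenever n < 0. Let P : ι → ℤ → R be a family of coefficient functions such that each P b has finite support. If for every b' ∈ ι and every t ∈ ℤ the (finite) sum ∑_{b ∈ ι} ∑_{n ∈ ℤ} P b n · G b b' (t − n) lies in S, then P b n ∈ S for all b ∈ ι and n ∈ ℤ. -/
import Mathlib


/-- Abstract integrality lemma: if `(G b b' n)_{n ∈ ℤ}` records an almost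
orthonormal pairing (`G b b' n = 0` for `n > 0`, `G b b' 0 = δ_{b b'}`, and
`G b b' n ∈ S` for `n < 0`), `P b` are finitely supported coefficient
functions, and all the convolution sums `∑_b ∑_n P b n · G b b' (t − n)` lie
in the subring `S`, then all coefficients `P b n` lie in `S`. -/
theorem coefficients_mem_subring_of_pairing
    (R : Type*) [CommRing R] (S : Subring R)
    (ι : Type*) [Fintype ι]
    (G : ι → ι → ℤ → R)
    (hGpos : ∀ b b' n, 0 < n → G b b' n = 0)
    (hGdiag : ∀ b, G b b 0 = 1)
    (hGoff : ∀ b b', b ≠ b' → G b b' 0 = 0)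
    (hGneg : ∀ b b' n, n < 0 → G b b' n ∈ S)
    (P : ι → ℤ → R)
    (hP : ∀ b, (Function.support (P b)).Finite)
    (h : ∀ (b' : ι) (t : ℤ), (∑ b : ι, ∑ᶠ n : ℤ, P b n * G b b' (t - n)) ∈ S) :
    ∀ b n, P b n ∈ S := by
  classical
  set T : Finset ℤ := Finset.univ.biUnion (fun b => (hP b).toFinset) with hTdef
  have hT : ∀ b n, P b n ≠ 0 → n ∈ T := by
    intro b n hn
    simp only [hTdef, Finset.mem_biUnion, Set.Finite.mem_toFinset,
      Function.mem_support]
    exact ⟨b, Finset.mem_univ b, hn⟩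
  obtain ⟨M, hM⟩ : ∃ M : ℤ, ∀ x ∈ T, x ≤ M := T.exists_le
  -- key identity: the convolution at (b', t) is P b' t plus higher terms
  have key : ∀ b' t, (∑ b : ι, ∑ᶠ n : ℤ, P b n * G b b' (t - n))
      = P b' t + ∑ b : ι, ∑ n ∈ T.filter (fun n => t < n), P b n * G b b' (t - n) := by
    intro b' t
    have h1 : ∀ b : ι, (∑ᶠ n : ℤ, P b n * G b b' (t - n))
        = ∑ n ∈ insert t (T.filter (fun n => t < n)), P b n * G b b' (t - n) := by
      intro b
      apply finsum_eq_finset_sum_of_support_subset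
      intro n hn
      have hn' : P b n * G b b' (t - n) ≠ 0 := hn
      have hPn : P b n ≠ 0 := fun h0 => hn' (by simp [h0])
      have hGn : G b b' (t - n) ≠ 0 := fun h0 => hn' (by simp [h0])
      have hge : t ≤ n := by
        by_contra hlt
        exact hGn (hGpos _ _ _ (by omega))
      rcases eq_or_lt_of_le hge with heq | hlt
      · simp [heq.symm]
      · exact Finset.mem_insert_of_mem (Finset.mem_filter.mpr ⟨hT b n hPn, hlt⟩)
    have h2 : t ∉ T.filter (fun n => t < n) := by simp
    calc (∑ b : ι, ∑ᶠ n : ℤ, P b n * G b b' (t - n))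
        = ∑ b : ι, (P b t * G b b' (t - t)
            + ∑ n ∈ T.filter (fun n => t < n), P b n * G b b' (t - n)) := by
          refine Finset.sum_congr rfl (fun b _ => ?_)
          rw [h1 b, Finset.sum_insert h2]
      _ = (∑ b : ι, P b t * G b b' 0)
            + ∑ b : ι, ∑ n ∈ T.filter (fun n => t < n), P b n * G b b' (t - n) := by
          rw [← Finset.sum_add_distrib]; simp
      _ = P b' t + ∑ b : ι, ∑ n ∈ T.filter (fun n => t < n), P b n * G b b' (t - n) := by
          congr 1
          rw [Finset.sum_eq_single b']
          · rw [hGdiag b', mul_one]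
          · intro b _ hb; rw [hGoff b b' hb, mul_zero]
          · intro hb; exact absurd (Finset.mem_univ b') hb
  -- downward induction
  have main : ∀ k : ℕ, ∀ b n, M - k < n → P b n ∈ S := by
    intro k
    induction k with
    | zero =>
      intro b n hn
      have : P b n = 0 := by
        by_contra h0
        exact absurd (hM n (hT b n h0)) (by omega)
      rw [this]; exact S.zero_mem
    | succ k ih =>
      intro b n hn
      by_cases hcase : M - k < n
      · exact ih b n hcase
      · -- n = M - k
        have hconv := h b n
        rw [key b n] at hconv
        have hcorr : (∑ b' : ι, ∑ m ∈ T.filter (fun m => n < m),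
            P b' m * G b' b (n - m)) ∈ S := by
          refine Subring.sum_mem _ (fun b' _ => Subring.sum_mem _ (fun m hm => ?_))
          rw [Finset.mem_filter] at hm
          exact Subring.mul_mem _ (ih b' m (by omega)) (hGneg _ _ _ (by omega))
        have : P b n = (P b n + ∑ b' : ι, ∑ m ∈ T.filter (fun m => n < m),
            P b' m * G b' b (n - m)) - ∑ b' : ι, ∑ m ∈ T.filter (fun m => n < m),
            P b' m * G b' b (n - m) := by ring
        rw [this]
        exact Subring.sub_mem _ hconv hcorr
  intro b n
  exact main ((M - n).toNat + 1) b n (by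
    have := Int.self_le_toNat (M - n)
    push_cast
    omega)
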